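/- arXiv:2505.02069 — 4 statements merged into one kernel-verified Lean document; each statement's English description precedes it below -/
import Mathlib

section
/- For any distinct real numbers z' and z'', the mean-value slope ∫₀¹ μ'(z' + v(z''−z')) dv is bounded below by μ'(z')·(1−exp(−|z'−z''|))/|z'−z''| and above by μ'(z')·(exp(|z'−z''|)−1)/|z'−z''|. -/
noncomputable def sigmoid : ℝ → ℝ := fun x => (1 + Real.exp (-x))⁻¹

noncomputable def sigDeriv (x : ℝ) : ℝ := Real.exp (-x) / (1 + Real.exp (-x)) ^ 2

lemma one_add_exp_pos (x : ℝ) : 0 < 1 + Real.exp (-x) := by positivity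

lemma sigDeriv_pos (x : ℝ) : 0 < sigDeriv x := by
  unfold sigDeriv; positivity

lemma deriv_sigmoid (x : ℝ) : deriv sigmoid x = sigDeriv x := by
  have h1 : HasDerivAt (fun x : ℝ => Real.exp (-x)) (-Real.exp (-x)) x := by
    have h := (hasDerivAt_neg x).exp; rw [mul_neg_one] at h; exact h
  have h2 : HasDerivAt (fun x : ℝ => 1 + Real.exp (-x)) (-Real.exp (-x)) x := by
    have h := (hasDerivAt_const x (1:ℝ)).add h1; rw [zero_add] at h; exact h
  have h3 := h2.inv (ne_of_gt (one_add_exp_pos x))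
  have h4 : HasDerivAt sigmoid (sigDeriv x) x := by
    refine h3.congr_deriv ?_
    unfold sigDeriv
    field_simp
  exact h4.deriv

lemma sigDeriv_key (x y : ℝ) : sigDeriv x ≤ sigDeriv y * Real.exp |x - y| := by
  have ha := Real.exp_pos (-x)
  have hb := Real.exp_pos (-y)
  unfold sigDeriv
  rw [div_mul_eq_mul_div, div_le_div_iff₀ (by positivity) (by positivity)]
  rcases le_total x y with hxy | hxy
  · have hab : Real.exp (-y) ≤ Real.exp (-x) := Real.exp_le_exp.mpr (by linarith)
    have hc : Real.exp |x - y| * Real.exp (-y) = Real.exp (-x) := by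
      rw [abs_of_nonpos (by linarith), ← Real.exp_add]; ring_nf
    set a := Real.exp (-x); set b := Real.exp (-y)
    nlinarith [sq_nonneg (a - b), sq_nonneg (a + b)]
  · have hab : Real.exp (-x) ≤ Real.exp (-y) := Real.exp_le_exp.mpr (by linarith)
    have hc : Real.exp |x - y| * Real.exp (-x) = Real.exp (-y) := by
      rw [abs_of_nonneg (by linarith), ← Real.exp_add]; ring_nf
    set a := Real.exp (-x); set b := Real.exp (-y)
    set c := Real.exp |x - y|
    have hcpos : 0 < c := Real.exp_pos _
    have h1 : a * (1 + b) ≤ b * (1 + a) := by nlinarith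
    have h2 : a * (a * (1 + b) ^ 2) ≤ a * (b * c * (1 + a) ^ 2) := by
      nlinarith [mul_le_mul h1 h1 (by positivity) (by positivity)]
    exact le_of_mul_le_mul_left h2 ha

lemma sigDeriv_continuous : Continuous sigDeriv := by
  unfold sigDeriv
  apply Continuous.div
  · fun_prop
  · fun_prop
  · intro x; positivity

theorem sigmoid_self_concordant (z' z'' : ℝ) (h : z' ≠ z'') :
    deriv sigmoid z' * (1 - Real.exp (-|z' - z''|)) / |z' - z''| ≤
      (∫ v in (0:ℝ)..1, deriv sigmoid (z' + v * (z'' - z'))) ∧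
    (∫ v in (0:ℝ)..1, deriv sigmoid (z' + v * (z'' - z'))) ≤
      deriv sigmoid z' * (Real.exp |z' - z''| - 1) / |z' - z''| := by
  set A := |z' - z''| with hA
  have hApos : 0 < A := abs_pos.mpr (sub_ne_zero.mpr h)
  have hAd : A = |z'' - z'| := abs_sub_comm _ _
  -- rewrite deriv as sigDeriv
  simp only [deriv_sigmoid]
  set d := z'' - z' with hd
  have hint : IntervalIntegrable (fun v => sigDeriv (z' + v * d)) MeasureTheory.volume 0 1 :=
    (sigDeriv_continuous.comp (by fun_prop)).intervalIntegrable 0 1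
  have hlow : IntervalIntegrable (fun v => sigDeriv z' * Real.exp (-(A * v)))
      MeasureTheory.volume 0 1 := (by fun_prop : Continuous _).intervalIntegrable 0 1
  have hup : IntervalIntegrable (fun v => sigDeriv z' * Real.exp (A * v))
      MeasureTheory.volume 0 1 := (by fun_prop : Continuous _).intervalIntegrable 0 1
  have habs : ∀ v ∈ Set.Icc (0:ℝ) 1, |z' - (z' + v * d)| = A * v := by
    intro v hv
    have : z' - (z' + v * d) = -(v * d) := by ring
    rw [this, abs_neg, abs_mul, abs_of_nonneg hv.1, hAd]
    ring
  have hptlow : ∀ v ∈ Set.Icc (0:ℝ) 1,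
      sigDeriv z' * Real.exp (-(A * v)) ≤ sigDeriv (z' + v * d) := by
    intro v hv
    have hk := sigDeriv_key z' (z' + v * d)
    rw [habs v hv] at hk
    have := mul_le_mul_of_nonneg_right hk (le_of_lt (Real.exp_pos (-(A * v))))
    calc sigDeriv z' * Real.exp (-(A * v)) ≤
        sigDeriv (z' + v * d) * Real.exp (A * v) * Real.exp (-(A * v)) := this
      _ = sigDeriv (z' + v * d) := by
          rw [mul_assoc, ← Real.exp_add]; simp
  have hptup : ∀ v ∈ Set.Icc (0:ℝ) 1,
      sigDeriv (z' + v * d) ≤ sigDeriv z' * Real.exp (A * v) := by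
    intro v hv
    have hk := sigDeriv_key (z' + v * d) z'
    rwa [abs_sub_comm, habs v hv] at hk
  -- compute the bounding integrals
  have hIu : (∫ v in (0:ℝ)..1, sigDeriv z' * Real.exp (A * v))
      = sigDeriv z' * (Real.exp A - 1) / A := by
    rw [intervalIntegral.integral_const_mul,
      intervalIntegral.integral_comp_mul_left (fun x => Real.exp x) (ne_of_gt hApos)]
    simp [integral_exp, Real.exp_zero, smul_eq_mul]
    field_simp
  have hIl : (∫ v in (0:ℝ)..1, sigDeriv z' * Real.exp (-(A * v)))
      = sigDeriv z' * (1 - Real.exp (-A)) / A := by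
    have : ∀ v : ℝ, Real.exp (-(A * v)) = Real.exp ((-A) * v) := by
      intro v; ring_nf
    simp only [this]
    rw [intervalIntegral.integral_const_mul,
      intervalIntegral.integral_comp_mul_left (fun x => Real.exp x) (by linarith : (-A) ≠ 0)]
    simp [integral_exp, Real.exp_zero, smul_eq_mul]
    have hAne : A ≠ 0 := ne_of_gt hApos
    rw [eq_div_iff hAne]
    field_simp
    ring
  constructor
  · rw [← hIl]
    exact intervalIntegral.integral_mono_on (by norm_num) hlow hint hptlow
  · rw [← hIu]
    exact intervalIntegral.integral_mono_on (by norm_num) hint hup hptup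
end

section
/- For any real numbers z' and z'', the mean-value slope ∫₀¹ μ'(z' + v(z''−z')) dv is at least μ'(z')/(1+|z'−z''|) and at least μ''(z'')/(1+|z'−z''|), i.e., at least max{μ'(z'), μ'(z'')}/(1+|z'−z''|). -/
lemma sigmoid_hasDerivAt (x : ℝ) :
    HasDerivAt sigmoid (Real.exp (-x) / (1 + Real.exp (-x)) ^ 2) x := by
  have h1 : HasDerivAt (fun y : ℝ => 1 + Real.exp (-y)) (-Real.exp (-x)) x := by
    have := ((Real.hasDerivAt_exp (-x)).comp x (hasDerivAt_neg x)).const_add 1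
    simpa [mul_comm] using this
  have hne : (1 + Real.exp (-x)) ≠ 0 := by positivity
  have := h1.inv hne
  rw [neg_neg] at this
  exact this

lemma deriv_sigmoid_s4 (x : ℝ) :
    deriv sigmoid x = Real.exp (-x) / (1 + Real.exp (-x)) ^ 2 :=
  (sigmoid_hasDerivAt x).deriv

lemma deriv_sigmoid_cont : Continuous (deriv sigmoid) := by
  have : deriv sigmoid = fun x => Real.exp (-x) / (1 + Real.exp (-x)) ^ 2 :=
    funext deriv_sigmoid_s4
  rw [this]
  apply Continuous.div
  · fun_prop
  · fun_prop
  · intro x; positivity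

lemma key_ineq (a b : ℝ) (hab : a < b) :
    deriv sigmoid a / (1 + (b - a)) ≤ (sigmoid b - sigmoid a) / (b - a) ∧
    deriv sigmoid b / (1 + (b - a)) ≤ (sigmoid b - sigmoid a) / (b - a) := by
  set u := Real.exp (-a) with hu_def
  set r := Real.exp (-(b - a)) with hr_def
  have hu : 0 < u := Real.exp_pos _
  have hr : 0 < r := Real.exp_pos _
  have hd : 0 < b - a := by linarith
  have hb : Real.exp (-b) = u * r := by
    rw [hu_def, hr_def, ← Real.exp_add]; ring_nf
  have hkey : (1 + (b - a)) * r ≤ 1 := by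
    have h1 : (b - a) + 1 ≤ Real.exp (b - a) := Real.add_one_le_exp _
    have h2 : Real.exp (b - a) * r = 1 := by
      rw [hr_def, ← Real.exp_add]; simp
    nlinarith
  have hsb : sigmoid b = (1 + u * r)⁻¹ := by simp [sigmoid, hb]
  have hsa : sigmoid a = (1 + u)⁻¹ := by simp [sigmoid, hu_def]
  have hda : deriv sigmoid a = u / (1 + u) ^ 2 := deriv_sigmoid_s4 a
  have hdb : deriv sigmoid b = u * r / (1 + u * r) ^ 2 := by
    rw [deriv_sigmoid_s4 b, hb]
  rw [hsb, hsa, hda, hdb]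
  have h1u : (0:ℝ) < 1 + u := by positivity
  have h1ur : (0:ℝ) < 1 + u * r := by positivity
  have h1d : (0:ℝ) < 1 + (b - a) := by positivity
  have hdiff : (1 + u * r)⁻¹ - (1 + u)⁻¹ = (u * (1 - r)) / ((1 + u) * (1 + u * r)) := by
    field_simp
    ring
  have hA : b - a ≤ (1 - r) * (1 + (b - a)) := by nlinarith
  have hr1 : r ≤ 1 := by nlinarith
  constructor
  · rw [div_le_div_iff₀ h1d hd, hdiff, div_mul_eq_mul_div, div_mul_eq_mul_div,
      div_le_div_iff₀ (by positivity) (by positivity)]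
    nlinarith [mul_nonneg (mul_nonneg (sub_nonneg.mpr hA) hu.le) (sq_nonneg (1 + u)),
      mul_nonneg (mul_nonneg (mul_nonneg hd.le (sq_nonneg u)) (sub_nonneg.mpr hr1)) h1u.le,
      mul_pos hu h1u, mul_pos hu h1ur]
  · rw [div_le_div_iff₀ h1d hd, hdiff, div_mul_eq_mul_div, div_mul_eq_mul_div,
      div_le_div_iff₀ (by positivity) (by positivity)]
    nlinarith [mul_nonneg (mul_nonneg (sub_nonneg.mpr hA) hu.le) (sq_nonneg (1 + u * r)),
      mul_nonneg (mul_nonneg (mul_nonneg hd.le hu.le) (sub_nonneg.mpr hr1)) h1ur.le,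
      mul_pos hu h1ur]

theorem sigmoid_slope_lower_bound (z' z'' : ℝ) :
    deriv sigmoid z' / (1 + |z' - z''|) ≤
      (∫ v in (0:ℝ)..1, deriv sigmoid (z' + v * (z'' - z'))) ∧
    deriv sigmoid z'' / (1 + |z' - z''|) ≤
      (∫ v in (0:ℝ)..1, deriv sigmoid (z' + v * (z'' - z'))) := by
  rcases lt_trichotomy z' z'' with h | h | h
  · have hd : z'' - z' ≠ 0 := by intro hc; linarith [sub_eq_zero.mp hc]
    have hint : (∫ v in (0:ℝ)..1, deriv sigmoid (z' + v * (z'' - z')))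
        = (sigmoid z'' - sigmoid z') / (z'' - z') := by
      have h1 : ∀ v : ℝ, z' + v * (z'' - z') = (z'' - z') * v + z' := fun v => by ring
      simp_rw [h1]
      rw [intervalIntegral.integral_comp_mul_add (deriv sigmoid) hd z']
      rw [intervalIntegral.integral_deriv_eq_sub
        (fun x _ => (sigmoid_hasDerivAt x).differentiableAt)
        (deriv_sigmoid_cont.intervalIntegrable _ _)]
      simp [smul_eq_mul, div_eq_inv_mul]
    rw [hint, abs_of_neg (by linarith : z' - z'' < 0)]
    have := key_ineq z' z'' h
    simpa [neg_sub] using this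
  · subst h
    simp only [sub_self, mul_zero, add_zero, abs_zero]
    rw [intervalIntegral.integral_const]
    norm_num
  · have hd : z'' - z' ≠ 0 := by intro hc; linarith [sub_eq_zero.mp hc]
    have hint : (∫ v in (0:ℝ)..1, deriv sigmoid (z' + v * (z'' - z')))
        = (sigmoid z' - sigmoid z'') / (z' - z'') := by
      have h1 : ∀ v : ℝ, z' + v * (z'' - z') = (z'' - z') * v + z' := fun v => by ring
      simp_rw [h1]
      rw [intervalIntegral.integral_comp_mul_add (deriv sigmoid) hd z']
      rw [intervalIntegral.integral_deriv_eq_sub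
        (fun x _ => (sigmoid_hasDerivAt x).differentiableAt)
        (deriv_sigmoid_cont.intervalIntegrable _ _)]
      rw [smul_eq_mul, show z'' - z' = -(z' - z'') by ring, inv_neg, div_eq_inv_mul]
      ring
    rw [hint, abs_of_pos (by linarith : 0 < z' - z'')]
    have := key_ineq z'' z' h
    exact ⟨this.2, this.1⟩
end

section
/- Let λ > 0 and x₁,…,x_T ∈ ℝ^d, and define Z_t = λI + Σ_{i=1}^t x_i x_iᵀ. Then Σ_{t=1}^T min{1, ‖x_t‖²_{Z_{t-1}⁻¹}} ≤ 2·log(det Z_T / det(λI)) (elliptical potential lemma). -/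
open Matrix

lemma outer_psd {d : ℕ} (v : Fin d → ℝ) : (vecMulVec v v).PosSemidef := by
  rw [Matrix.posSemidef_iff_dotProduct_mulVec]
  constructor
  · ext i j
    simp [conjTranspose_apply, vecMulVec_apply, mul_comm]
  · intro y
    have h : vecMulVec v v *ᵥ y = (v ⬝ᵥ y) • v := by
      ext i
      simp [vecMulVec_apply, mulVec, dotProduct, Finset.mul_sum, mul_comm, mul_assoc,
        mul_left_comm]
    rw [h]
    simp only [star_trivial, dotProduct_smul, smul_eq_mul]
    rw [dotProduct_comm]
    exact mul_self_nonneg _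

lemma smul_one_pd {d : ℕ} {lam : ℝ} (hlam : 0 < lam) :
    (lam • (1 : Matrix (Fin d) (Fin d) ℝ)).PosDef := by
  rw [Matrix.posDef_iff_dotProduct_mulVec]
  constructor
  · unfold Matrix.IsHermitian
    simp
  · intro y hy
    have : (lam • (1 : Matrix (Fin d) (Fin d) ℝ)) *ᵥ y = lam • y := by
      simp [smul_mulVec]
    rw [this]
    simp only [star_trivial, dotProduct_smul, smul_eq_mul]
    exact mul_pos hlam (dotProduct_self_star_pos_iff.mpr hy)

lemma min_le_two_log {u : ℝ} (hu : 0 ≤ u) : min 1 u ≤ 2 * Real.log (1 + u) := by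
  rcases le_total u 1 with h | h
  · rw [min_eq_right h]
    have h2 : Real.exp (u / 2) ≤ 1 + u := by
      have e1 : 1 - u / 2 ≤ Real.exp (-(u / 2)) := by
        have := Real.add_one_le_exp (-(u / 2)); linarith
      have e2 : Real.exp (u / 2) * (1 - u / 2) ≤ 1 := by
        calc Real.exp (u / 2) * (1 - u / 2) ≤ Real.exp (u / 2) * Real.exp (-(u / 2)) := by
              exact mul_le_mul_of_nonneg_left e1 (Real.exp_pos _).le
          _ = 1 := by rw [← Real.exp_add]; simp
      nlinarith [Real.exp_pos (u / 2), sq_nonneg u]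
    have := (Real.le_log_iff_exp_le (by linarith : (0:ℝ) < 1 + u)).mpr h2
    linarith
  · rw [min_eq_left h]
    have h2 : Real.log 2 ≤ Real.log (1 + u) := by
      apply Real.log_le_log (by norm_num)
      linarith
    have := Real.log_two_gt_d9
    linarith

theorem elliptical_potential {d T : ℕ} (lam : ℝ) (hlam : 0 < lam)
    (x : ℕ → Fin d → ℝ) (Z : ℕ → Matrix (Fin d) (Fin d) ℝ)
    (hZ : ∀ t, Z t = lam • (1 : Matrix (Fin d) (Fin d) ℝ) +
      ∑ i ∈ Finset.range t, vecMulVec (x i) (x i)) :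
    ∑ t ∈ Finset.range T, min 1 (x t ⬝ᵥ (Z t)⁻¹ *ᵥ x t) ≤
      2 * Real.log ((Z T).det / (lam • (1 : Matrix (Fin d) (Fin d) ℝ)).det) := by
  -- positive definiteness
  have hpd : ∀ t, (Z t).PosDef := by
    intro t
    rw [hZ t]
    refine Matrix.PosDef.add_posSemidef (smul_one_pd hlam) ?_
    refine Finset.sum_induction _ _ (fun a b ha hb => ha.add hb) ?_ (fun i _ => outer_psd (x i))
    simpa using (Matrix.PosSemidef.zero (n := Fin d) (R := ℝ))
  set u : ℕ → ℝ := fun t => x t ⬝ᵥ (Z t)⁻¹ *ᵥ x t with hu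
  have hunn : ∀ t, 0 ≤ u t := by
    intro t
    have := ((hpd t).inv.posSemidef).dotProduct_mulVec_nonneg (x t)
    simpa using this
  -- determinant recursion
  have hdet : ∀ t, (Z (t + 1)).det = (Z t).det * (1 + u t) := by
    intro t
    have hA := (hpd t).det_pos.ne'
    have hstep : Z (t + 1) = Z t * (1 + (Z t)⁻¹ * (replicateCol (Fin 1) (x t) * replicateRow (Fin 1) (x t))) := by
      rw [mul_add, mul_one, Matrix.mul_nonsing_inv_cancel_left _ _ hA.isUnit,
        hZ (t + 1), hZ t, Finset.sum_range_succ, ← add_assoc, vecMulVec_eq (Fin 1)]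
      rfl
    rw [hstep, det_mul, ← Matrix.mul_assoc, ← replicateCol_mulVec]
    erw [det_one_add_replicateCol_mul_replicateRow]
  have hdetpos : ∀ t, 0 < (Z t).det := fun t => (hpd t).det_pos
  have hlog : ∀ t, Real.log ((Z (t+1)).det) - Real.log ((Z t).det) = Real.log (1 + u t) := by
    intro t
    rw [hdet t, Real.log_mul (hdetpos t).ne' (by have := hunn t; positivity)]
    ring
  have hZ0 : Z 0 = lam • (1 : Matrix (Fin d) (Fin d) ℝ) := by simp [hZ 0]
  calc ∑ t ∈ Finset.range T, min 1 (u t)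
      ≤ ∑ t ∈ Finset.range T, 2 * Real.log (1 + u t) :=
        Finset.sum_le_sum fun t _ => min_le_two_log (hunn t)
    _ = 2 * ∑ t ∈ Finset.range T, (Real.log ((Z (t+1)).det) - Real.log ((Z t).det)) := by
        rw [Finset.mul_sum]; exact Finset.sum_congr rfl fun t _ => by rw [hlog t]
    _ = 2 * (Real.log ((Z T).det) - Real.log ((Z 0).det)) := by
        rw [Finset.sum_range_sub (fun t => Real.log ((Z t).det))]
    _ = 2 * Real.log ((Z T).det / (lam • (1 : Matrix (Fin d) (Fin d) ℝ)).det) := by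
        rw [← hZ0, Real.log_div (hdetpos T).ne' (hdetpos 0).ne']
end

section
/- Let v₁,…,v_n ∈ ℝ^d be a sequence of vectors, λ > 0, and suppose each index t in a subset S ⊆ [n] satisfies ‖v_t‖²_{(λI + Σ_{i<t, i∈S} v_i v_iᵀ)⁻¹} ≥ 1. Then |S| ≤ (1/log 2)·log(det(λI + Σ_{i∈S} v_i v_iᵀ)/det(λI)) (elliptical potential count lemma). -/
open Matrix

lemma psd_vmv {d : ℕ} (w : Fin d → ℝ) : (vecMulVec w w).PosSemidef := by
  refine Matrix.PosSemidef.of_dotProduct_mulVec_nonneg ?_ ?_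
  · ext i j; simp [vecMulVec_apply, mul_comm, Matrix.conjTranspose_apply]
  · intro x
    have : x ⬝ᵥ (vecMulVec w w *ᵥ x) = (w ⬝ᵥ x) * (w ⬝ᵥ x) := by
      simp [dotProduct, mulVec, vecMulVec_apply, Finset.mul_sum, Finset.sum_mul]
      rw [Finset.sum_comm]
      exact Finset.sum_congr rfl fun i _ => Finset.sum_congr rfl fun j _ => by ring
    simp only [RCLike.star_def, star_trivial] at *
    rw [this]
    exact mul_self_nonneg _

lemma pd_M {d : ℕ} (lam : ℝ) (hlam : 0 < lam) (v : ℕ → Fin d → ℝ) (T : Finset ℕ) :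
    (lam • (1 : Matrix (Fin d) (Fin d) ℝ) + ∑ i ∈ T, vecMulVec (v i) (v i)).PosDef := by
  have h1 : (lam • (1 : Matrix (Fin d) (Fin d) ℝ)).PosDef := by
    rw [Matrix.smul_one_eq_diagonal]
    exact Matrix.posDef_diagonal_iff.mpr fun _ => hlam
  exact h1.add_posSemidef (Finset.sum_induction _ _ (fun a b ha hb => ha.add hb)
    (Matrix.PosSemidef.zero) (fun i _ => psd_vmv (v i)))

lemma detlemma {d : ℕ} {A : Matrix (Fin d) (Fin d) ℝ} (hA : A.PosDef) (w : Fin d → ℝ) :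
    (A + vecMulVec w w).det = A.det * (1 + w ⬝ᵥ A⁻¹ *ᵥ w) := by
  rw [vecMulVec_eq (Fin 1), Matrix.det_add_replicateCol_mul_replicateRow (isUnit_iff_ne_zero.mpr hA.det_pos.ne') w w]
  simp only [det_unique, Matrix.add_apply, Matrix.one_apply_eq]
  have h2 : (replicateRow (Fin 1) w * A⁻¹ * replicateCol (Fin 1) w) default default = w ⬝ᵥ A⁻¹ *ᵥ w := by
    simp [Matrix.mul_apply, dotProduct, mulVec, Finset.sum_mul, Finset.mul_sum]
    rw [Finset.sum_comm]
    exact Finset.sum_congr rfl fun i _ => Finset.sum_congr rfl fun j _ => by ring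
  rw [h2]

lemma key {d : ℕ} (lam : ℝ) (hlam : 0 < lam) (v : ℕ → Fin d → ℝ) :
    ∀ S : Finset ℕ,
    (∀ t ∈ S, 1 ≤ v t ⬝ᵥ (lam • (1 : Matrix (Fin d) (Fin d) ℝ) +
      ∑ i ∈ S.filter (· < t), vecMulVec (v i) (v i))⁻¹ *ᵥ v t) →
    (2 : ℝ) ^ S.card * lam ^ d ≤ (lam • (1 : Matrix (Fin d) (Fin d) ℝ) +
        ∑ i ∈ S, vecMulVec (v i) (v i)).det := by
  intro S
  induction S using Finset.strongInduction with
  | _ S ih =>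
    intro h
    rcases S.eq_empty_or_nonempty with rfl | hne
    · simp [Matrix.det_smul]
    · set t := S.max' hne with ht
      have htS : t ∈ S := S.max'_mem hne
      have hfil : S.filter (· < t) = S.erase t := by
        ext x
        simp only [Finset.mem_filter, Finset.mem_erase]
        constructor
        · rintro ⟨hx, hlt⟩; exact ⟨hlt.ne, hx⟩
        · rintro ⟨hne', hx⟩; exact ⟨hx, lt_of_le_of_ne (S.le_max' x hx) hne'⟩
      have hsum : ∑ i ∈ S, vecMulVec (v i) (v i) =
          (∑ i ∈ S.erase t, vecMulVec (v i) (v i)) + vecMulVec (v t) (v t) :=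
        (Finset.sum_erase_add S _ htS).symm
      have hA := pd_M lam hlam v (S.erase t)
      have hdet : (lam • (1 : Matrix (Fin d) (Fin d) ℝ) + ∑ i ∈ S, vecMulVec (v i) (v i)).det
          = (lam • (1 : Matrix (Fin d) (Fin d) ℝ) + ∑ i ∈ S.erase t, vecMulVec (v i) (v i)).det *
            (1 + v t ⬝ᵥ (lam • (1 : Matrix (Fin d) (Fin d) ℝ) +
              ∑ i ∈ S.erase t, vecMulVec (v i) (v i))⁻¹ *ᵥ v t) := by
        rw [hsum, ← add_assoc, detlemma hA]
      have hq : 1 ≤ v t ⬝ᵥ (lam • (1 : Matrix (Fin d) (Fin d) ℝ) +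
          ∑ i ∈ S.erase t, vecMulVec (v i) (v i))⁻¹ *ᵥ v t := by
        have := h t htS
        rwa [hfil] at this
      have hih : (2 : ℝ) ^ (S.erase t).card * lam ^ d ≤
          (lam • (1 : Matrix (Fin d) (Fin d) ℝ) + ∑ i ∈ S.erase t, vecMulVec (v i) (v i)).det := by
        apply ih _ (Finset.erase_ssubset htS)
        intro t' ht'
        have ht'S : t' ∈ S := Finset.mem_of_mem_erase ht'
        have : (S.erase t).filter (· < t') = S.filter (· < t') := by
          ext x
          simp only [Finset.mem_filter, Finset.mem_erase]
          constructor
          · rintro ⟨⟨_, hx⟩, hlt⟩; exact ⟨hx, hlt⟩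
          · rintro ⟨hx, hlt⟩
            refine ⟨⟨?_, hx⟩, hlt⟩
            have : t' ≤ t := S.le_max' t' ht'S
            omega
        rw [this]
        exact h t' ht'S
      have hcard : S.card = (S.erase t).card + 1 := by
        have hpos : 0 < S.card := Finset.card_pos.mpr hne
        rw [Finset.card_erase_of_mem htS]
        omega
      rw [hcard, hdet, pow_succ]
      calc (2 : ℝ) ^ (S.erase t).card * 2 * lam ^ d
          = ((2 : ℝ) ^ (S.erase t).card * lam ^ d) * 2 := by ring
        _ ≤ (lam • (1 : Matrix (Fin d) (Fin d) ℝ) +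
              ∑ i ∈ S.erase t, vecMulVec (v i) (v i)).det * (1 + v t ⬝ᵥ (lam • (1 : Matrix (Fin d) (Fin d) ℝ) +
              ∑ i ∈ S.erase t, vecMulVec (v i) (v i))⁻¹ *ᵥ v t) := by
            apply mul_le_mul hih (by linarith) (by norm_num)
            exact hA.det_pos.le

theorem elliptical_potential_count {d n : ℕ} (lam : ℝ) (hlam : 0 < lam)
    (v : ℕ → Fin d → ℝ) (S : Finset ℕ) (hS : S ⊆ Finset.range n)
    (h : ∀ t ∈ S, 1 ≤ v t ⬝ᵥ (lam • (1 : Matrix (Fin d) (Fin d) ℝ) +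
      ∑ i ∈ S.filter (· < t), vecMulVec (v i) (v i))⁻¹ *ᵥ v t) :
    (S.card : ℝ) ≤ (1 / Real.log 2) *
      Real.log ((lam • (1 : Matrix (Fin d) (Fin d) ℝ) +
        ∑ i ∈ S, vecMulVec (v i) (v i)).det /
        (lam • (1 : Matrix (Fin d) (Fin d) ℝ)).det) := by
  have hkey := key lam hlam v S h
  have hdet0 : (lam • (1 : Matrix (Fin d) (Fin d) ℝ)).det = lam ^ d := by
    simp [Matrix.det_smul]
  have hlampos : (0:ℝ) < lam ^ d := pow_pos hlam d
  have hratio : (2 : ℝ) ^ S.card ≤ (lam • (1 : Matrix (Fin d) (Fin d) ℝ) +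
      ∑ i ∈ S, vecMulVec (v i) (v i)).det / (lam • (1 : Matrix (Fin d) (Fin d) ℝ)).det := by
    rw [hdet0, le_div_iff₀ hlampos]
    exact hkey
  have hlog2 : (0:ℝ) < Real.log 2 := Real.log_pos (by norm_num)
  rw [one_div_mul_eq_div, le_div_iff₀ hlog2]
  calc (S.card : ℝ) * Real.log 2 = Real.log ((2:ℝ) ^ S.card) := by
        rw [Real.log_pow]
    _ ≤ _ := Real.log_le_log (by positivity) hratio
end
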